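/- Let k ≥ 1, m ≥ 0, (x,y) ∈ ℝ², and (x',y') = G_{km}(x,y). If k is odd, then x' + y' = x + y + (m/(k+1))·y − m(m+1)/6 − (1/3)·Σ_{j=1}^{⌊(m+1)/2⌋} γ̄_{k+2j−1}. If k is even, then x' + y' = x + y + (m/(k+1))·y − m(m+1)/6 + (m/3)·γ̄_{k+1} − (1/3)·Σ_{j=1}^{⌊m/2⌋} γ̄_{k+2j}. -/

import Mathlib

open Finset

/-- The sequence `γ` with `γ₁ = γ₂ = 1` and `γ_k = ∏_{j=1}^{⌊(k−1)/2⌋} (2j+1)/(2j)`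
for `k ≥ 3` (the empty product is `1`, so the formula is also valid for `k = 1, 2`). -/
noncomputable def gammaSeq (k : ℕ) : ℝ :=
  ∏ j ∈ Finset.Icc 1 ((k - 1) / 2), (2 * (j : ℝ) + 1) / (2 * (j : ℝ))

/-- `γ̄_k = γ_k / k`. -/
noncomputable def gammaBar (k : ℕ) : ℝ := gammaSeq k / k

/-- `δ_k = (1/3)(k + (−1)^k γ_k)`. -/
noncomputable def deltaSeq (k : ℕ) : ℝ := (1 / 3) * ((k : ℝ) + (-1) ^ k * gammaSeq k)

/-- `f_k(x,y) = (y, ((k+2)/(k+1))·x)`. -/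
noncomputable def fmap (k : ℕ) : ℝ × ℝ → ℝ × ℝ :=
  fun xy => (xy.2, ((k : ℝ) + 2) / ((k : ℝ) + 1) * xy.1)

/-- `g_k(x,y) = (x + δ_{k+1}, ((k+2)/(k+1))·(y − δ_{k+1}))`. -/
noncomputable def gmap (k : ℕ) : ℝ × ℝ → ℝ × ℝ :=
  fun xy => (xy.1 + deltaSeq (k + 1), ((k : ℝ) + 2) / ((k : ℝ) + 1) * (xy.2 - deltaSeq (k + 1)))

/-- `G_{k0} = id` and `G_{km} = g_{k+m−1} ∘ g_{k+m−2} ∘ ⋯ ∘ g_k` for `m ≥ 1`. -/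
noncomputable def Gmap (k : ℕ) : ℕ → (ℝ × ℝ → ℝ × ℝ)
  | 0 => id
  | m + 1 => gmap (k + m) ∘ Gmap k m

/-- `F_{km} = G_{k+1,m−1} ∘ f_k` (for `m ≥ 1`). -/
noncomputable def Fmap (k m : ℕ) : ℝ × ℝ → ℝ × ℝ := Gmap (k + 1) (m - 1) ∘ fmap k

/-- The sets `A_k ⊆ ℝ²`: `A₁ = {(0,0)}` and `A_{k+1} = f_k(A_k) ∪ g_k(A_k)` for
`k ≥ 1` (the value at `0` is junk). -/
noncomputable def Aset : ℕ → Set (ℝ × ℝ)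
  | 0 => ∅
  | 1 => {(0, 0)}
  | k + 2 => fmap (k + 1) '' Aset (k + 1) ∪ gmap (k + 1) '' Aset (k + 1)

noncomputable def Tsum (k m : ℕ) : ℝ :=
  ∑ i ∈ Finset.Icc 1 m, (-1 : ℝ) ^ (k + i) * gammaBar (k + i)

lemma Tsum_succ (k m : ℕ) :
    Tsum k (m + 1) = Tsum k m + (-1 : ℝ) ^ (k + m + 1) * gammaBar (k + m + 1) := by
  unfold Tsum
  rw [Finset.sum_Icc_succ_top (by omega)]
  rfl

lemma gammaBar_succ (t : ℕ) (ht : Even t) (h0 : 0 < t) :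
    gammaBar (t + 1) = gammaBar t := by
  obtain ⟨s, rfl⟩ := ht
  have hs : 0 < s := by omega
  unfold gammaBar gammaSeq
  have h1 : (s + s + 1 - 1) / 2 = s := by omega
  have h2 : (s + s - 1) / 2 = s - 1 := by omega
  rw [h1, h2]
  have h3 : s = (s - 1) + 1 := by omega
  rw [h3, Finset.prod_Icc_succ_top (by omega)]
  rw [← h3]
  have hc1 : ((s : ℝ) + s) ≠ 0 := by positivity
  have hc2 : ((s + s + 1 : ℕ) : ℝ) ≠ 0 := by positivity
  have hc3 : (2 * (s : ℝ)) ≠ 0 := by positivity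
  have hB : (0:ℝ) < ∏ x ∈ Icc 1 (s - 1), 2 * (x : ℝ) :=
    Finset.prod_pos (fun i hi => by
      have : 1 ≤ i := (Finset.mem_Icc.mp hi).1
      have : (1:ℝ) ≤ (i:ℝ) := by exact_mod_cast this
      nlinarith)
  push_cast
  rw [div_eq_div_iff (by positivity) (by positivity)]
  field_simp
  ring

lemma delta_eq (n : ℕ) (h : 0 < n) :
    deltaSeq n = (n : ℝ) * (1 / 3 + (1 / 3) * (-1) ^ n * gammaBar n) := by
  have hn : (n : ℝ) ≠ 0 := by positivity
  unfold deltaSeq gammaBar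
  field_simp

lemma Tsum_zero (k : ℕ) : Tsum k 0 = 0 := by simp [Tsum]

lemma Tsum_odd (k : ℕ) (hk : Odd k) (hk1 : 1 ≤ k) (m : ℕ) :
    Tsum k m = if Odd m then gammaBar (k + m) else 0 := by
  have hk2 := Nat.odd_iff.mp hk
  induction m with
  | zero => simp [Tsum]
  | succ m ih =>
    rw [Tsum_succ, ih]
    rcases Nat.even_or_odd m with he | ho
    · have hm2 := Nat.even_iff.mp he
      have h1 : Even (k + m + 1) := Nat.even_iff.mpr (by omega)
      rw [h1.neg_one_pow]
      simp only [Nat.odd_iff, ← Nat.add_assoc]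
      split_ifs <;> (first | ring1 | (exfalso; omega))
    · have hm2 := Nat.odd_iff.mp ho
      have h1 : Odd (k + m + 1) := Nat.odd_iff.mpr (by omega)
      have h2 : Even (k + m) := Nat.even_iff.mpr (by omega)
      rw [h1.neg_one_pow, gammaBar_succ (k + m) h2 (by omega)]
      simp only [Nat.odd_iff, ← Nat.add_assoc]
      split_ifs <;> (first | ring1 | (exfalso; omega))

lemma Tsum_even (k : ℕ) (hk : Even k) (hk1 : 1 ≤ k) (m : ℕ) :
    Tsum k m = (if 1 ≤ m then -gammaBar (k + 1) else 0)
      + (if Even m ∧ 1 ≤ m then gammaBar (k + m) else 0) := by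
  have hk2 := Nat.even_iff.mp hk
  induction m with
  | zero => simp [Tsum]
  | succ m ih =>
    rcases Nat.eq_zero_or_pos m with rfl | hm
    · rw [Tsum_succ, Tsum_zero]
      have h1 : Odd (k + 0 + 1) := Nat.odd_iff.mpr (by omega)
      rw [h1.neg_one_pow]
      simp [Nat.even_iff, Nat.odd_iff]
    · rw [Tsum_succ, ih]
      rcases Nat.even_or_odd m with he | ho
      · have hm2 := Nat.even_iff.mp he
        have h1 : Odd (k + m + 1) := Nat.odd_iff.mpr (by omega)
        have h2 : Even (k + m) := Nat.even_iff.mpr (by omega)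
        rw [h1.neg_one_pow, gammaBar_succ (k + m) h2 (by omega)]
        simp only [Nat.even_iff, ← Nat.add_assoc]
        split_ifs <;> (first | ring1 | (exfalso; omega))
      · have hm2 := Nat.odd_iff.mp ho
        have h1 : Even (k + m + 1) := Nat.even_iff.mpr (by omega)
        rw [h1.neg_one_pow]
        simp only [Nat.even_iff, ← Nat.add_assoc]
        split_ifs <;> (first | ring1 | (exfalso; omega))

lemma snd_Gmap (k : ℕ) (x y : ℝ) : ∀ m : ℕ,
    (Gmap k m (x, y)).2
      = ((k : ℝ) + m + 1) * (y / ((k : ℝ) + 1) - (m : ℝ) / 3 - (1 / 3) * Tsum k m)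
  | 0 => by
    have h : ((k : ℝ) + 1) ≠ 0 := by positivity
    simp [Gmap, Tsum_zero]
    field_simp
  | (m + 1) => by
    have hkm : ((k : ℝ) + m + 1) ≠ 0 := by positivity
    have ih := snd_Gmap k x y m
    show (gmap (k + m) (Gmap k m (x, y))).2 = _
    simp only [gmap]
    rw [ih, Tsum_succ, delta_eq (k + m + 1) (by omega)]
    push_cast
    field_simp
    ring

lemma sum_Gmap_succ (k m : ℕ) (x y : ℝ) :
    (Gmap k (m + 1) (x, y)).1 + (Gmap k (m + 1) (x, y)).2
      = (Gmap k m (x, y)).1 + (Gmap k m (x, y)).2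
        + (y / ((k : ℝ) + 1) - ((m : ℝ) + 1) / 3 - (1 / 3) * Tsum k (m + 1)) := by
  have hkm : ((k : ℝ) + m + 1) ≠ 0 := by positivity
  have hk1 : ((k : ℝ) + 1) ≠ 0 := by positivity
  show (gmap (k + m) (Gmap k m (x, y))).1 + (gmap (k + m) (Gmap k m (x, y))).2 = _
  simp only [gmap]
  rw [snd_Gmap, Tsum_succ, delta_eq (k + m + 1) (by omega)]
  push_cast
  field_simp
  ring

lemma sumOdd_succ (k m : ℕ) :
    ∑ j ∈ Finset.Icc 1 ((m + 2) / 2), gammaBar (k + 2 * j - 1)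
      = (∑ j ∈ Finset.Icc 1 ((m + 1) / 2), gammaBar (k + 2 * j - 1))
        + (if Even m then gammaBar (k + m + 1) else 0) := by
  rcases Nat.even_or_odd m with ⟨s, rfl⟩ | ⟨s, rfl⟩
  · have h1 : (s + s + 2) / 2 = s + 1 := by omega
    have h2 : (s + s + 1) / 2 = s := by omega
    rw [h1, h2, Finset.sum_Icc_succ_top (by omega)]
    simp only [Nat.even_iff]
    rw [if_pos (by omega), show k + 2 * (s + 1) - 1 = k + (s + s) + 1 by omega]
  · have h1 : (2 * s + 1 + 2) / 2 = s + 1 := by omega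
    have h2 : (2 * s + 1 + 1) / 2 = s + 1 := by omega
    rw [h1, h2, if_neg (by simp [Nat.even_iff] <;> omega)]
    ring

lemma sumEven_succ (k m : ℕ) :
    ∑ j ∈ Finset.Icc 1 ((m + 1) / 2), gammaBar (k + 2 * j)
      = (∑ j ∈ Finset.Icc 1 (m / 2), gammaBar (k + 2 * j))
        + (if Odd m then gammaBar (k + m + 1) else 0) := by
  rcases Nat.even_or_odd m with ⟨s, rfl⟩ | ⟨s, rfl⟩
  · have h1 : (s + s + 1) / 2 = s := by omega
    have h2 : (s + s) / 2 = s := by omega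
    rw [h1, h2, if_neg (by simp [Nat.odd_iff] <;> omega)]
    ring
  · have h1 : (2 * s + 1 + 1) / 2 = s + 1 := by omega
    have h2 : (2 * s + 1) / 2 = s := by omega
    rw [h1, h2, Finset.sum_Icc_succ_top (by omega)]
    simp only [Nat.odd_iff]
    rw [if_pos (by omega), show k + 2 * (s + 1) = k + (2 * s + 1) + 1 by omega]

/-- Effect of `G_{km}` on the coordinate sum: for `k ≥ 1`, `m ≥ 0`
and `(x',y') = G_{km}(x,y)`: if `k` is odd then
`x' + y' = x + y + (m/(k+1))·y − m(m+1)/6 − (1/3)·Σ_{j=1}^{⌊(m+1)/2⌋} γ̄_{k+2j−1}`,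
and if `k` is even then
`x' + y' = x + y + (m/(k+1))·y − m(m+1)/6 + (m/3)·γ̄_{k+1} − (1/3)·Σ_{j=1}^{⌊m/2⌋} γ̄_{k+2j}`. -/
theorem stmt12 (k : ℕ) (hk : 1 ≤ k) (m : ℕ) (x y : ℝ) :
    (Odd k →
      (Gmap k m (x, y)).1 + (Gmap k m (x, y)).2
        = x + y + (m : ℝ) / ((k : ℝ) + 1) * y - (m : ℝ) * ((m : ℝ) + 1) / 6
            - (1 / 3) * ∑ j ∈ Finset.Icc 1 ((m + 1) / 2), gammaBar (k + 2 * j - 1)) ∧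
    (Even k →
      (Gmap k m (x, y)).1 + (Gmap k m (x, y)).2
        = x + y + (m : ℝ) / ((k : ℝ) + 1) * y - (m : ℝ) * ((m : ℝ) + 1) / 6
            + (m : ℝ) / 3 * gammaBar (k + 1)
            - (1 / 3) * ∑ j ∈ Finset.Icc 1 (m / 2), gammaBar (k + 2 * j)) := by
  induction m with
  | zero =>
    constructor <;> intro _ <;> simp [Gmap]
  | succ m ih =>
    have key := sum_Gmap_succ k m x y
    constructor
    · intro hkodd
      have hk2 := Nat.odd_iff.mp hkodd
      rw [key, ih.1 hkodd, Tsum_odd k hkodd hk (m + 1),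
        show m + 1 + 1 = m + 2 from rfl, sumOdd_succ k m]
      simp only [show k + (m + 1) = k + m + 1 from rfl, Nat.odd_iff, Nat.even_iff]
      rcases Nat.even_or_odd m with he | ho
      · have hm2 := Nat.even_iff.mp he
        rw [if_pos (by omega), if_pos (by omega)]
        push_cast
        ring
      · have hm2 := Nat.odd_iff.mp ho
        rw [if_neg (by omega), if_neg (by omega)]
        push_cast
        ring
    · intro hkeven
      have hk2 := Nat.even_iff.mp hkeven
      rw [key, ih.2 hkeven, Tsum_even k hkeven hk (m + 1), sumEven_succ k m]
      simp only [show k + (m + 1) = k + m + 1 from rfl, Nat.odd_iff, Nat.even_iff]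
      rw [if_pos (by omega : 1 ≤ m + 1)]
      rcases Nat.even_or_odd m with he | ho
      · have hm2 := Nat.even_iff.mp he
        rw [if_neg (by omega), if_neg (by omega)]
        push_cast
        ring
      · have hm2 := Nat.odd_iff.mp ho
        rw [if_pos (by omega), if_pos (by omega)]
        push_cast
        ring
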